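/- Let I ⊆ ℝ be an open interval, k ∈ {−1, 1}, and ξ : I → ℝ a three times differentiable function with ξ > 0 and k·ξ̈ < 0 on I. Define φ := √(−k·ξ³·ξ̈) and v := ξ⁴/φ³. Then for all constants c₁, c₂ ∈ ℝ, the function α(t) := (c₁ + c₂t)/ξ(t) satisfies the T-model field equation 2vφα̈ + (v̇φ + 3vφ̇)α̇ − 2kα = 0 on I; conversely, every twice differentiable solution α of this equation on I is of the form α(t) = (c₁ + c₂t)/ξ(t) for some constants c₁, c₂ ∈ ℝ. -/

import Mathlib

noncomputable section

open Filter

/-- The metric function `φ = √(−kξ³ξ̈)` of the ξ-algorithm. -/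
def xiPhi (k : ℝ) (ξ : ℝ → ℝ) : ℝ → ℝ :=
  fun t => Real.sqrt (-(k * ξ t ^ 3 * deriv (deriv ξ) t))

/-- The metric function `v = ξ⁴/φ³` of the ξ-algorithm. -/
def xiV (k : ℝ) (ξ : ℝ → ℝ) : ℝ → ℝ :=
  fun t => ξ t ^ 4 / xiPhi k ξ t ^ 3

/-- The T-model field equation `2vφα̈ + (v̇φ + 3vφ̇)α̇ − 2kα = 0` at the point `t`. -/
def TModelFieldEq (k : ℝ) (v φ α : ℝ → ℝ) (t : ℝ) : Prop :=
  2 * v t * φ t * deriv (deriv α) t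
    + (deriv v t * φ t + 3 * v t * deriv φ t) * deriv α t - 2 * k * α t = 0

private lemma const_of_deriv_zero_on {I : Set ℝ} (hIopen : IsOpen I) (hconv : Convex ℝ I)
    {f : ℝ → ℝ} (hdiff : ∀ t ∈ I, DifferentiableAt ℝ f t)
    (hd : ∀ t ∈ I, deriv f t = 0) {x y : ℝ} (hx : x ∈ I) (hy : y ∈ I) : f x = f y := by
  refine hconv.is_const_of_fderivWithin_eq_zero
    (fun t ht => (hdiff t ht).differentiableWithinAt) (fun t ht => ?_) hx hy
  rw [fderivWithin_of_isOpen hIopen ht, ← toSpanSingleton_deriv, hd t ht]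
  ext
  simp

theorem xi_algorithm
    (I : Set ℝ) (hIopen : IsOpen I) (hIconn : I.OrdConnected)
    (k : ℝ) (hk : k = -1 ∨ k = 1)
    (ξ : ℝ → ℝ)
    (hξ : ∀ t ∈ I, DifferentiableAt ℝ ξ t ∧ DifferentiableAt ℝ (deriv ξ) t ∧
      DifferentiableAt ℝ (deriv (deriv ξ)) t)
    (hξpos : ∀ t ∈ I, 0 < ξ t)
    (hξ'' : ∀ t ∈ I, k * deriv (deriv ξ) t < 0) :
    (∀ c₁ c₂ : ℝ, ∀ t ∈ I,
      TModelFieldEq k (xiV k ξ) (xiPhi k ξ) (fun u => (c₁ + c₂ * u) / ξ u) t)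
    ∧ (∀ α : ℝ → ℝ,
        (∀ t ∈ I, DifferentiableAt ℝ α t ∧ DifferentiableAt ℝ (deriv α) t) →
        (∀ t ∈ I, TModelFieldEq k (xiV k ξ) (xiPhi k ξ) α t) →
        ∃ c₁ c₂ : ℝ, ∀ t ∈ I, α t = (c₁ + c₂ * t) / ξ t) := by
  have hk2 : k * k = 1 := by rcases hk with h | h <;> rw [h] <;> norm_num
  have hk0 : k ≠ 0 := by rcases hk with h | h <;> rw [h] <;> norm_num
  have hpos : ∀ t ∈ I, 0 < -(k * ξ t ^ 3 * deriv (deriv ξ) t) := by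
    intro t ht
    have h1 := hξ'' t ht
    have h2 := hξpos t ht
    nlinarith [pow_pos h2 3]
  have hC0 : ∀ t ∈ I, deriv (deriv ξ) t ≠ 0 := by
    intro t ht h
    have := hξ'' t ht
    rw [h] at this; simp at this
  have hA0 : ∀ t ∈ I, ξ t ≠ 0 := fun t ht => (hξpos t ht).ne'
  have hPpos : ∀ t ∈ I, 0 < xiPhi k ξ t := fun t ht => Real.sqrt_pos.mpr (hpos t ht)
  have hP0 : ∀ t ∈ I, xiPhi k ξ t ≠ 0 := fun t ht => (hPpos t ht).ne'
  have hP2 : ∀ t ∈ I, xiPhi k ξ t ^ 2 = -(k * ξ t ^ 3 * deriv (deriv ξ) t) :=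
    fun t ht => Real.sq_sqrt (hpos t ht).le
  have hPdiff : ∀ t ∈ I, DifferentiableAt ℝ (xiPhi k ξ) t := by
    intro t ht
    obtain ⟨h1, _, h3⟩ := hξ t ht
    exact ((((differentiableAt_const k).mul (h1.pow 3)).mul h3).neg).sqrt (hpos t ht).ne'
  -- derivative of V
  have hderivV : ∀ t ∈ I, deriv (xiV k ξ) t =
      (4 * ξ t ^ 3 * deriv ξ t * xiPhi k ξ t ^ 3
        - ξ t ^ 4 * (3 * xiPhi k ξ t ^ 2 * deriv (xiPhi k ξ) t)) / (xiPhi k ξ t ^ 3) ^ 2 := by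
    intro t ht
    obtain ⟨h1, _, _⟩ := hξ t ht
    have hrw : deriv (xiV k ξ) t = deriv (fun u => ξ u ^ 4 / xiPhi k ξ u ^ 3) t := rfl
    rw [hrw, deriv_fun_div (c := fun u => ξ u ^ 4) (d := fun u => xiPhi k ξ u ^ 3) (h1.pow 4) ((hPdiff t ht).pow 3) (pow_ne_zero _ (hP0 t ht)),
      deriv_fun_pow h1 4, deriv_fun_pow (hPdiff t ht) 3]
    norm_num
  have hc1 : ∀ t ∈ I, 2 * xiV k ξ t * xiPhi k ξ t
      = -2 * k * ξ t / deriv (deriv ξ) t := by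
    intro t ht
    have hP2t := hP2 t ht
    have hC := hC0 t ht
    have hP := hP0 t ht
    have hrw : xiV k ξ t = ξ t ^ 4 / xiPhi k ξ t ^ 3 := rfl
    rw [hrw]
    field_simp
    linear_combination (ξ t * k) * hP2t
      - ξ t ^ 4 * deriv (deriv ξ) t * hk2
  have hc2 : ∀ t ∈ I, deriv (xiV k ξ) t * xiPhi k ξ t + 3 * xiV k ξ t * deriv (xiPhi k ξ) t
      = -4 * k * deriv ξ t / deriv (deriv ξ) t := by
    intro t ht
    have hP2t := hP2 t ht
    have hC := hC0 t ht
    have hP := hP0 t ht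
    have hVP : deriv (xiV k ξ) t * xiPhi k ξ t + 3 * xiV k ξ t * deriv (xiPhi k ξ) t
        = 4 * ξ t ^ 3 * deriv ξ t / xiPhi k ξ t ^ 2 := by
      rw [hderivV t ht, show xiV k ξ t = ξ t ^ 4 / xiPhi k ξ t ^ 3 from rfl]
      field_simp
      ring
    have hA := hA0 t ht
    rw [hVP, hP2t]
    field_simp
    linear_combination (deriv ξ t) * hk2
  have key : ∀ t ∈ I, ∀ y'' y' y : ℝ,
      (2 * xiV k ξ t * xiPhi k ξ t * y''
        + (deriv (xiV k ξ) t * xiPhi k ξ t + 3 * xiV k ξ t * deriv (xiPhi k ξ) t) * y'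
        - 2 * k * y = 0)
      ↔ ξ t * y'' + 2 * deriv ξ t * y' + deriv (deriv ξ) t * y = 0 := by
    intro t ht y'' y' y
    have hC := hC0 t ht
    rw [hc1 t ht, hc2 t ht]
    have hfac : -2 * k * ξ t / deriv (deriv ξ) t * y''
        + -4 * k * deriv ξ t / deriv (deriv ξ) t * y' - 2 * k * y
        = (-2 * k / deriv (deriv ξ) t)
          * (ξ t * y'' + 2 * deriv ξ t * y' + deriv (deriv ξ) t * y) := by
      field_simp
      ring
    rw [hfac]
    constructor
    · intro h
      rcases mul_eq_zero.mp h with h3 | h3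
      · exfalso
        rw [div_eq_zero_iff] at h3
        rcases h3 with h3 | h3
        · exact hk0 (by linarith)
        · exact hC h3
      · exact h3
    · intro h
      rw [h, mul_zero]
  constructor
  · -- forward direction
    intro c₁ c₂ t ht
    obtain ⟨h1, h2, _⟩ := hξ t ht
    have hlin : ∀ u : ℝ, DifferentiableAt ℝ (fun s : ℝ => c₁ + c₂ * s) u := fun u =>
      (differentiableAt_const _).add ((differentiableAt_const _).mul differentiableAt_fun_id)
    have hdlin : ∀ u : ℝ, deriv (fun s : ℝ => c₁ + c₂ * s) u = c₂ := fun u => by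
      simpa using (((hasDerivAt_id u).const_mul c₂).const_add c₁).deriv
    have hαd : ∀ u ∈ I, deriv (fun s => (c₁ + c₂ * s) / ξ s) u
        = (c₂ * ξ u - (c₁ + c₂ * u) * deriv ξ u) / ξ u ^ 2 := by
      intro u hu
      rw [deriv_fun_div (hlin u) (hξ u hu).1 (hA0 u hu), hdlin u]
    refine (key t ht _ _ _).mpr ?_
    have heq : deriv (fun s => (c₁ + c₂ * s) / ξ s) =ᶠ[nhds t]
        fun u => (c₂ * ξ u - (c₁ + c₂ * u) * deriv ξ u) / ξ u ^ 2 := by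
      filter_upwards [hIopen.mem_nhds ht] with u hu using hαd u hu
    have hnum : DifferentiableAt ℝ (fun u => c₂ * ξ u - (c₁ + c₂ * u) * deriv ξ u) t :=
      ((differentiableAt_const _).mul h1).sub ((hlin t).mul h2)
    rw [heq.deriv_eq, deriv_fun_div (d := fun u => ξ u ^ 2) hnum (h1.pow 2) (pow_ne_zero _ (hA0 t ht)),
      deriv_fun_sub (f := fun u => c₂ * ξ u) (g := fun u => (c₁ + c₂ * u) * deriv ξ u)
        ((differentiableAt_const _).mul h1) ((hlin t).mul h2),
      deriv_const_mul _ h1, deriv_fun_mul (hlin t) h2, hdlin t, deriv_fun_pow h1 2,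
      hαd t ht]
    have hA := hA0 t ht
    field_simp
    ring
  · -- converse
    intro α hαdiff hsol
    rcases Set.eq_empty_or_nonempty I with rfl | ⟨t₀, ht₀⟩
    · exact ⟨0, 0, by simp⟩
    have hconv : Convex ℝ I := convex_iff_ordConnected.mpr hIconn
    have hFd : ∀ u ∈ I, deriv (fun s => ξ s * α s) u
        = deriv ξ u * α u + ξ u * deriv α u := fun u hu =>
      deriv_mul (hξ u hu).1 (hαdiff u hu).1
    have heqF : ∀ u ∈ I, deriv (fun s => ξ s * α s) =ᶠ[nhds u]
        fun s => deriv ξ s * α s + ξ s * deriv α s := by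
      intro u hu
      filter_upwards [hIopen.mem_nhds hu] with s hs using hFd s hs
    have hFdiff : ∀ u ∈ I, DifferentiableAt ℝ (fun s => ξ s * α s) u := fun u hu =>
      ((hξ u hu).1).mul (hαdiff u hu).1
    have hFd_diff : ∀ u ∈ I, DifferentiableAt ℝ (deriv (fun s => ξ s * α s)) u := by
      intro u hu
      rw [(heqF u hu).differentiableAt_iff]
      exact ((hξ u hu).2.1.mul (hαdiff u hu).1).add ((hξ u hu).1.mul (hαdiff u hu).2)
    have hFdd : ∀ u ∈ I, deriv (deriv (fun s => ξ s * α s)) u = 0 := by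
      intro u hu
      rw [(heqF u hu).deriv_eq,
        deriv_fun_add (f := fun s => deriv ξ s * α s) (g := fun s => ξ s * deriv α s) ((hξ u hu).2.1.mul (hαdiff u hu).1) ((hξ u hu).1.mul (hαdiff u hu).2),
        deriv_fun_mul (hξ u hu).2.1 (hαdiff u hu).1, deriv_fun_mul (hξ u hu).1 (hαdiff u hu).2]
      have h0 : ξ u * deriv (deriv α) u + 2 * deriv ξ u * deriv α u
          + deriv (deriv ξ) u * α u = 0 := (key u hu _ _ _).mp (hsol u hu)
      linear_combination h0
    have hFdconst : ∀ u ∈ I, deriv (fun s => ξ s * α s) u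
        = deriv (fun s => ξ s * α s) t₀ :=
      fun u hu => const_of_deriv_zero_on hIopen hconv hFd_diff hFdd hu ht₀
    set c₂ := deriv (fun s => ξ s * α s) t₀ with hc₂
    have hGdiff : ∀ u ∈ I, DifferentiableAt ℝ (fun s => ξ s * α s - c₂ * s) u := fun u hu =>
      (hFdiff u hu).sub ((differentiableAt_const _).mul differentiableAt_fun_id)
    have hGd : ∀ u ∈ I, deriv (fun s => ξ s * α s - c₂ * s) u = 0 := by
      intro u hu
      rw [deriv_fun_sub (g := fun s => c₂ * s) (hFdiff u hu) ((differentiableAt_const _).mul differentiableAt_fun_id)]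
      have : deriv (fun s : ℝ => c₂ * s) u = c₂ := by
        simpa using ((hasDerivAt_id u).const_mul c₂).deriv
      rw [this, hFdconst u hu, sub_eq_zero]
    refine ⟨ξ t₀ * α t₀ - c₂ * t₀, c₂, fun u hu => ?_⟩
    have hGconst : ξ u * α u - c₂ * u = ξ t₀ * α t₀ - c₂ * t₀ :=
      const_of_deriv_zero_on hIopen hconv hGdiff hGd hu ht₀
    rw [eq_div_iff (hA0 u hu)]
    linear_combination hGconst
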